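/- For every complex number q with |q| < 1, the sum of the terms of ∑_{k∈ℤ}(−1)^k q^{k(5k+1)/2} over those k congruent to 2 modulo 3 equals −q²·φ(q⁹)·a(q⁹); that is, ∑_{k∈ℤ, k≡2 (mod 3)}(−1)^k q^{k(5k+1)/2} = −q²·φ(q⁹)·a(q⁹). (Lemma 3.6: the part of b(q)φ(q) supported on exponents ≡ 2 mod 3 equals −q²a(q⁹)φ(q⁹).) -/

import Mathlib

open scoped BigOperators

/-- The Euler function `φ(q) = ∏_{n=1}^∞ (1 - q^n)`. -/
noncomputable def eulerPhi (q : ℂ) : ℂ := ∏' n : ℕ, (1 - q ^ (n + 1))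

/-- The first Rogers–Ramanujan series
`a(q) = ∏_{n=1}^∞ 1/((1 - q^{5n-2})(1 - q^{5n-3}))`. -/
noncomputable def rrA (q : ℂ) : ℂ :=
  ∏' n : ℕ, ((1 - q ^ (5 * n + 3)) * (1 - q ^ (5 * n + 2)))⁻¹

/-- The second Rogers–Ramanujan series
`b(q) = ∏_{n=1}^∞ 1/((1 - q^{5n-1})(1 - q^{5n-4}))`. -/
noncomputable def rrB (q : ℂ) : ℂ :=
  ∏' n : ℕ, ((1 - q ^ (5 * n + 4)) * (1 - q ^ (5 * n + 1)))⁻¹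

/-- `G(q) = ∏_{n=1}^∞ (1-q^{15n})(1-q^{15n-7})(1-q^{15n-8})
          - q ∏_{n=1}^∞ (1-q^{15n})(1-q^{15n-13})(1-q^{15n-2})`. -/
noncomputable def Gf (q : ℂ) : ℂ :=
  (∏' n : ℕ, (1 - q ^ (15 * n + 15)) * (1 - q ^ (15 * n + 8)) * (1 - q ^ (15 * n + 7)))
  - q * ∏' n : ℕ, (1 - q ^ (15 * n + 15)) * (1 - q ^ (15 * n + 2)) * (1 - q ^ (15 * n + 13))

/-- `H(q) = ∏_{n=1}^∞ (1-q^{15n})(1-q^{15n-4})(1-q^{15n-11})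
          + q ∏_{n=1}^∞ (1-q^{15n})(1-q^{15n-14})(1-q^{15n-1})`. -/
noncomputable def Hf (q : ℂ) : ℂ :=
  (∏' n : ℕ, (1 - q ^ (15 * n + 15)) * (1 - q ^ (15 * n + 11)) * (1 - q ^ (15 * n + 4)))
  + q * ∏' n : ℕ, (1 - q ^ (15 * n + 15)) * (1 - q ^ (15 * n + 1)) * (1 - q ^ (15 * n + 14))

open Filter Topology Finset

namespace JTPAux


/-- partial products of `(1 - Q^{j+1})` -/
noncomputable def pp (Q : ℂ) (m : ℕ) : ℂ := ∏ j ∈ Finset.range m, (1 - Q ^ (j + 1))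

lemma one_sub_ne_zero {z : ℂ} (hz : ‖z‖ < 1) : 1 - z ≠ 0 := by
  intro h
  have : z = 1 := by linear_combination -h
  rw [this] at hz; simp at hz

lemma norm_pow_lt_one {Q : ℂ} (hQ : ‖Q‖ < 1) {k : ℕ} (hk : 1 ≤ k) : ‖Q ^ k‖ < 1 := by
  rw [norm_pow]
  calc ‖Q‖ ^ k ≤ ‖Q‖ ^ 1 := pow_le_pow_of_le_one (norm_nonneg _) hQ.le hk
  _ < 1 := by simpa using hQ

lemma pp_ne_zero {Q : ℂ} (hQ : ‖Q‖ < 1) (m : ℕ) : pp Q m ≠ 0 := by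
  refine Finset.prod_ne_zero_iff.2 fun j _ => one_sub_ne_zero ?_
  exact norm_pow_lt_one hQ (by omega)

lemma pp_succ (Q : ℂ) (m : ℕ) : pp Q (m + 1) = pp Q m * (1 - Q ^ (m + 1)) :=
  Finset.prod_range_succ _ _

/-- summability of geometric-type series -/
lemma summable_aux {r : ℝ} (hr0 : 0 ≤ r) (hr : r < 1) {c : ℕ → ℕ} (hc : ∀ n, n ≤ c n) :
    Summable (fun n => r ^ c n) := by
  refine Summable.of_nonneg_of_le (fun n => pow_nonneg hr0 _)
    (fun n => pow_le_pow_of_le_one hr0 hr.le (hc n)) (summable_geometric_of_lt_one hr0 hr)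

/-- The sum `S = ∑ r^{j+1}`. -/
noncomputable def S (r : ℝ) : ℝ := ∑' j : ℕ, r ^ (j + 1)

lemma S_nonneg {r : ℝ} (hr0 : 0 ≤ r) : 0 ≤ S r :=
  tsum_nonneg fun j => pow_nonneg hr0 _

lemma sum_range_le_S {r : ℝ} (hr0 : 0 ≤ r) (hr : r < 1) (m : ℕ) :
    ∑ j ∈ Finset.range m, r ^ (j + 1) ≤ S r :=
  Summable.sum_le_tsum _ (fun j _ => pow_nonneg hr0 _) (summable_aux hr0 hr fun n => by omega)

/-- upper bound on partial products -/
lemma pp_norm_le {Q : ℂ} (hQ : ‖Q‖ < 1) (m : ℕ) : ‖pp Q m‖ ≤ Real.exp (S ‖Q‖) := by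
  have h1 : ‖pp Q m‖ ≤ ∏ j ∈ Finset.range m, (1 + ‖Q‖ ^ (j + 1)) := by
    rw [pp, norm_prod]
    refine Finset.prod_le_prod (fun j _ => norm_nonneg _) fun j _ => ?_
    calc ‖1 - Q ^ (j+1)‖ ≤ ‖(1:ℂ)‖ + ‖Q ^ (j+1)‖ := norm_sub_le _ _
    _ = 1 + ‖Q‖ ^ (j+1) := by rw [norm_one, norm_pow]
  refine h1.trans ?_
  have h2 : ∏ j ∈ Finset.range m, (1 + ‖Q‖ ^ (j + 1)) ≤
      ∏ j ∈ Finset.range m, Real.exp (‖Q‖ ^ (j + 1)) := by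
    refine Finset.prod_le_prod (fun j _ => by positivity) fun j _ => ?_
    have := Real.add_one_le_exp (‖Q‖ ^ (j+1)); linarith
  refine h2.trans ?_
  rw [← Real.exp_sum]
  exact Real.exp_le_exp.2 (sum_range_le_S (norm_nonneg _) hQ m)

/-- pointwise lower bound `1 - x ≥ exp(-(x/(1-x)))` -/
lemma one_sub_ge_exp {x : ℝ} (h0 : 0 ≤ x) (h1 : x < 1) :
    Real.exp (-(x / (1 - x))) ≤ 1 - x := by
  have hy : 0 < 1 - x := by linarith
  have ht : (1:ℝ) + x / (1 - x) = 1 / (1 - x) := by field_simp; ring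
  have h2 : 1 / (1 - x) ≤ Real.exp (x / (1 - x)) := by
    have := Real.add_one_le_exp (x / (1 - x)); linarith
  rw [Real.exp_neg]
  rw [inv_le_comm₀ (Real.exp_pos _) hy] at *
  · calc (1 - x)⁻¹ = 1 / (1-x) := (one_div _).symm
    _ ≤ Real.exp (x / (1-x)) := h2

/-- lower bound on partial products -/
lemma pp_norm_ge {Q : ℂ} (hQ : ‖Q‖ < 1) (m : ℕ) :
    Real.exp (-(S ‖Q‖ / (1 - ‖Q‖))) ≤ ‖pp Q m‖ := by
  set r := ‖Q‖ with hr
  have hr0 : 0 ≤ r := norm_nonneg _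
  have h1 : ∏ j ∈ Finset.range m, (1 - r ^ (j + 1)) ≤ ‖pp Q m‖ := by
    rw [pp, norm_prod]
    refine Finset.prod_le_prod (fun j _ => ?_) fun j _ => ?_
    · have : r ^ (j+1) < 1 := by
        simpa [hr, norm_pow] using norm_pow_lt_one hQ (k := j+1) (by omega)
      linarith
    · have h := norm_sub_norm_le (1:ℂ) (Q ^ (j+1))
      simpa [norm_pow] using h
  refine le_trans ?_ h1
  have h2 : ∀ j : ℕ, Real.exp (-(r ^ (j+1) / (1 - r))) ≤ 1 - r ^ (j + 1) := by
    intro j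
    have hx1 : r ^ (j+1) < 1 := by
      simpa [hr, norm_pow] using norm_pow_lt_one hQ (k := j+1) (by omega)
    refine le_trans (Real.exp_le_exp.2 ?_) (one_sub_ge_exp (by positivity) hx1)
    have hd : 0 < 1 - r ^ (j+1) := by linarith
    have hxr : r ^ (j+1) ≤ r := by
      calc r ^ (j+1) ≤ r ^ 1 := pow_le_pow_of_le_one hr0 hQ.le (by omega)
      _ = r := pow_one r
    have hd' : 0 < 1 - r := by linarith
    have hmain : r ^ (j+1) / (1 - r ^ (j+1)) ≤ r ^ (j+1) / (1 - r) := by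
      gcongr <;> linarith
    exact neg_le_neg hmain
  have hg : Summable (fun j : ℕ => r ^ (j+1) / (1 - r)) :=
    (summable_aux hr0 hQ fun n => by omega).div_const _
  have key : Real.exp (-(S r / (1 - r))) ≤ ∏ j ∈ Finset.range m, (1 - r ^ (j + 1)) := by
    have hts : ∑ j ∈ Finset.range m, r ^ (j+1) / (1-r) ≤ S r / (1 - r) := by
      rw [S, ← Finset.sum_div]
      gcongr
      · exact sum_range_le_S hr0 hQ m
    calc Real.exp (-(S r / (1 - r))) ≤ Real.exp (-(∑ j ∈ Finset.range m, r ^ (j+1) / (1-r))) := by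
          exact Real.exp_le_exp.2 (by linarith)
    _ = ∏ j ∈ Finset.range m, Real.exp (-(r ^ (j+1) / (1-r))) := by
          rw [← Real.exp_sum, ← Finset.sum_neg_distrib]
    _ ≤ ∏ j ∈ Finset.range m, (1 - r ^ (j + 1)) :=
          Finset.prod_le_prod (fun j _ => (Real.exp_pos _).le) fun j _ => h2 j
  exact key



lemma summable_log {f : ℕ → ℂ} (h : Summable fun n => ‖f n - 1‖) :
    Summable fun n => Complex.log (f n) := by
  have h0 : Tendsto (fun n => ‖f n - 1‖) atTop (𝓝 0) := h.tendsto_atTop_zero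
  refine Summable.of_norm_bounded_eventually (g := fun n => 3/2 * ‖f n - 1‖) (h.mul_left _) ?_
  rw [Nat.cofinite_eq_atTop]
  filter_upwards [h0.eventually (gt_mem_nhds (show (0:ℝ) < 1/2 by norm_num))] with n hn
  have hfn : f n = 1 + (f n - 1) := by ring
  have hb := Complex.norm_log_one_add_half_le_self (z := f n - 1) hn.le
  rw [← hfn] at hb
  exact hb

lemma multipliable_of {f : ℕ → ℂ} (h0 : ∀ n, f n ≠ 0) (h : Summable fun n => ‖f n - 1‖) :
    Multipliable f :=
  Complex.multipliable_of_summable_log (summable_log h)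

lemma tprod_eq_exp {f : ℕ → ℂ} (h0 : ∀ n, f n ≠ 0) (h : Summable fun n => ‖f n - 1‖) :
    ∏' n, f n = Complex.exp (∑' n, Complex.log (f n)) :=
  (Complex.cexp_tsum_eq_tprod h0 (summable_log h)).symm

lemma tprod_ne_zero {f : ℕ → ℂ} (h0 : ∀ n, f n ≠ 0) (h : Summable fun n => ‖f n - 1‖) :
    ∏' n, f n ≠ 0 := by
  rw [tprod_eq_exp h0 h]; exact Complex.exp_ne_zero _

/-- The triangular number helper. -/
def T (n : ℤ) : ℤ := n * (n + 1) / 2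

lemma T_nonneg (n : ℤ) : 0 ≤ T n := by
  have h4 : 0 ≤ n * (n + 1) := by nlinarith [sq_nonneg (2*n+1)]
  exact Int.ediv_nonneg h4 (by norm_num)

lemma T_succ (n : ℤ) : T (n + 1) = T n + (n + 1) := by
  obtain ⟨m, hm⟩ := Int.even_mul_succ_self n
  have h1 : (n + 1) * (n + 1 + 1) = n * (n + 1) + 2 * (n + 1) := by ring
  unfold T; omega

lemma T_neg_succ (n : ℤ) : T (-(n + 1)) = T (-n) + n := by
  obtain ⟨m, hm⟩ := Int.even_mul_succ_self (-n)
  have h1 : -(n + 1) * (-(n + 1) + 1) = -n * (-n + 1) + 2 * n := by ring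
  unfold T; omega

/-- summand of Jacobi triple product -/
noncomputable def jt (a b : ℂ) (n : ℤ) : ℂ := a ^ T n * b ^ T (-n)

lemma zpow_T (a : ℂ) (n : ℤ) : a ^ T n = a ^ (T n).toNat := by
  rw [← zpow_natCast, Int.toNat_of_nonneg (T_nonneg n)]

lemma jt_step_a (a b : ℂ) {N : ℕ} {n : ℤ} (hn : n ≤ N) :
    a * (a * b) ^ N * jt a b n = (a * b) ^ (((N:ℤ) - n).toNat) * jt a b (n + 1) := by
  have ha : 1 + N + (T n).toNat = ((N:ℤ) - n).toNat + (T (n+1)).toNat := by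
    have h1 := T_nonneg n; have h2 := T_nonneg (n+1); have h3 := T_succ n; omega
  have hb : N + (T (-n)).toNat = ((N:ℤ) - n).toNat + (T (-(n+1))).toNat := by
    have h1 := T_nonneg (-n); have h2 := T_nonneg (-(n+1)); have h3 := T_neg_succ n; omega
  rw [jt, jt, zpow_T a n, zpow_T b (-n), zpow_T a (n+1), zpow_T b (-(n+1))]
  calc a * (a*b)^N * (a ^ (T n).toNat * b ^ (T (-n)).toNat)
      = a ^ (1 + N + (T n).toNat) * b ^ (N + (T (-n)).toNat) := by
        ring
    _ = a ^ (((N:ℤ) - n).toNat + (T (n+1)).toNat) * b ^ (((N:ℤ) - n).toNat + (T (-(n+1))).toNat) := by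
        rw [ha, hb]
    _ = (a*b) ^ (((N:ℤ) - n).toNat) * (a ^ (T (n+1)).toNat * b ^ (T (-(n+1))).toNat) := by
        ring

lemma jt_step_b (a b : ℂ) {N : ℕ} {n : ℤ} (hn : -(N:ℤ) ≤ n) :
    b * (a * b) ^ N * jt a b n = (a * b) ^ (((N:ℤ) + n).toNat) * jt a b (n - 1) := by
  have h3 : T n = T (n - 1) + n := by
    have := T_succ (n - 1); rw [show n - 1 + 1 = n by ring] at this; omega
  have h4 : T (-n) = T (-(n-1)) + (n - 1) := by
    have := T_neg_succ (n - 1); rw [show -(n - 1 + 1) = -n by ring] at this; omega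
  have ha : N + (T n).toNat = ((N:ℤ) + n).toNat + (T (n-1)).toNat := by
    have h1 := T_nonneg n; have h2 := T_nonneg (n-1); omega
  have hb : 1 + N + (T (-n)).toNat = ((N:ℤ) + n).toNat + (T (-(n-1))).toNat := by
    have h1 := T_nonneg (-n); have h2 := T_nonneg (-(n-1)); omega
  rw [jt, jt, zpow_T a n, zpow_T b (-n), zpow_T a (n-1), zpow_T b (-(n-1))]
  calc b * (a*b)^N * (a ^ (T n).toNat * b ^ (T (-n)).toNat)
      = a ^ (N + (T n).toNat) * b ^ (1 + N + (T (-n)).toNat) := by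
        ring
    _ = a ^ (((N:ℤ) + n).toNat + (T (n-1)).toNat) * b ^ (((N:ℤ) + n).toNat + (T (-(n-1))).toNat) := by
        rw [ha, hb]
    _ = (a*b) ^ (((N:ℤ) + n).toNat) * (a ^ (T (n-1)).toNat * b ^ (T (-(n-1))).toNat) := by
        ring


/-- Gaussian-binomial-type coefficient -/
noncomputable def gc (Q : ℂ) (N : ℕ) (n : ℤ) : ℂ :=
  if n.natAbs ≤ N then
    pp Q (2 * N) / (pp Q ((N:ℤ) + n).toNat * pp Q ((N:ℤ) - n).toNat)
  else 0

lemma gc_eq_zero {Q : ℂ} {N : ℕ} {n : ℤ} (h : N < n.natAbs) : gc Q N n = 0 :=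
  if_neg (by omega)

lemma gc_eq {Q : ℂ} {N : ℕ} {n : ℤ} (h : n.natAbs ≤ N) :
    gc Q N n = pp Q (2 * N) / (pp Q ((N:ℤ) + n).toNat * pp Q ((N:ℤ) - n).toNat) :=
  if_pos h

lemma pp_zero (Q : ℂ) : pp Q 0 = 1 := by simp [pp]

/-- uniform formula for `gc N (n-1)` -/
lemma gc_down {Q : ℂ} (hQ : ‖Q‖ < 1) {N : ℕ} {n : ℤ} (h : n.natAbs ≤ N) :
    gc Q N (n - 1) = pp Q (2 * N) * (1 - Q ^ (((N:ℤ) + n).toNat)) /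
      (pp Q ((N:ℤ) + n).toNat * pp Q (((N:ℤ) - n).toNat + 1)) := by
  set i := ((N:ℤ) + n).toNat with hi
  set j := ((N:ℤ) - n).toNat with hj
  clear_value i j
  rcases Nat.eq_zero_or_pos i with h0 | h0
  · have hn : n = -(N:ℤ) := by omega
    have : (n - 1).natAbs = N + 1 := by omega
    rw [gc_eq_zero (by omega), h0]
    simp
  · obtain ⟨i', rfl⟩ : ∃ i', i = i' + 1 := ⟨i - 1, by omega⟩
    have h1 : (n - 1).natAbs ≤ N := by omega
    rw [gc_eq h1]
    have e1 : ((N:ℤ) + (n - 1)).toNat = i' := by omega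
    have e2 : ((N:ℤ) - (n - 1)).toNat = j + 1 := by omega
    rw [e1, e2]
    rw [div_eq_div_iff (mul_ne_zero (pp_ne_zero hQ _) (pp_ne_zero hQ _))
      (mul_ne_zero (pp_ne_zero hQ _) (pp_ne_zero hQ _))]
    rw [pp_succ Q i']
    ring

/-- uniform formula for `gc N (n+1)` -/
lemma gc_up {Q : ℂ} (hQ : ‖Q‖ < 1) {N : ℕ} {n : ℤ} (h : n.natAbs ≤ N) :
    gc Q N (n + 1) = pp Q (2 * N) * (1 - Q ^ (((N:ℤ) - n).toNat)) /
      (pp Q (((N:ℤ) + n).toNat + 1) * pp Q ((N:ℤ) - n).toNat) := by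
  set i := ((N:ℤ) + n).toNat with hi
  set j := ((N:ℤ) - n).toNat with hj
  clear_value i j
  rcases Nat.eq_zero_or_pos j with h0 | h0
  · have : (n + 1).natAbs = N + 1 := by omega
    rw [gc_eq_zero (by omega), h0]
    simp
  · obtain ⟨j', rfl⟩ : ∃ j', j = j' + 1 := ⟨j - 1, by omega⟩
    have h1 : (n + 1).natAbs ≤ N := by omega
    rw [gc_eq h1]
    have e1 : ((N:ℤ) + (n + 1)).toNat = i + 1 := by omega
    have e2 : ((N:ℤ) - (n + 1)).toNat = j' := by omega
    rw [e1, e2]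
    rw [div_eq_div_iff (mul_ne_zero (pp_ne_zero hQ _) (pp_ne_zero hQ _))
      (mul_ne_zero (pp_ne_zero hQ _) (pp_ne_zero hQ _))]
    rw [pp_succ Q j']
    ring

/-- The key recurrence for the coefficients. -/
lemma gc_rec {Q : ℂ} (hQ : ‖Q‖ < 1) (N : ℕ) (n : ℤ) :
    gc Q (N + 1) n = (1 + Q ^ (2 * N + 1)) * gc Q N n
      + Q ^ (((N:ℤ) + 1 - n).toNat) * gc Q N (n - 1)
      + Q ^ (((N:ℤ) + 1 + n).toNat) * gc Q N (n + 1) := by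
  rcases le_or_gt n.natAbs N with hn | hn
  · -- main case
    have hn' : n.natAbs ≤ N + 1 := by omega
    rw [gc_eq hn', gc_eq hn, gc_down hQ hn, gc_up hQ hn]
    rw [show (((N:ℕ) + 1 : ℕ) : ℤ) + n = ((N:ℤ) + n) + 1 by push_cast; ring,
        show (((N:ℕ) + 1 : ℕ) : ℤ) - n = ((N:ℤ) - n) + 1 by push_cast; ring]
    rw [show (((N:ℤ) + n) + 1).toNat = ((N:ℤ) + n).toNat + 1 by omega,
        show (((N:ℤ) - n) + 1).toNat = ((N:ℤ) - n).toNat + 1 by omega,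
        show ((N:ℤ) + 1 - n).toNat = ((N:ℤ) - n).toNat + 1 by omega,
        show ((N:ℤ) + 1 + n).toNat = ((N:ℤ) + n).toNat + 1 by omega]
    set i := ((N:ℤ) + n).toNat with hi
    set j := ((N:ℤ) - n).toNat with hj
    have hij : i + j = 2 * N := by omega
    clear_value i j
    have n1 : pp Q i ≠ 0 := pp_ne_zero hQ _
    have n2 : pp Q j ≠ 0 := pp_ne_zero hQ _
    have n3 : (1 - Q ^ (i + 1)) ≠ 0 := one_sub_ne_zero (norm_pow_lt_one hQ (by omega))
    have n4 : (1 - Q ^ (j + 1)) ≠ 0 := one_sub_ne_zero (norm_pow_lt_one hQ (by omega))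
    have dD : pp Q (i+1) * pp Q (j+1) ≠ 0 := mul_ne_zero (pp_ne_zero hQ _) (pp_ne_zero hQ _)
    rw [← mul_div_assoc, ← mul_div_assoc, ← mul_div_assoc]
    have t1 : (1 + Q ^ (2*N+1)) * pp Q (2*N) / (pp Q i * pp Q j)
        = (1 + Q ^ (2*N+1)) * pp Q (2*N) * ((1 - Q^(i+1)) * (1 - Q^(j+1)))
            / (pp Q (i+1) * pp Q (j+1)) := by
      rw [div_eq_div_iff (mul_ne_zero n1 n2) dD, pp_succ Q i, pp_succ Q j]; ring
    have t2 : Q ^ (j+1) * (pp Q (2*N) * (1 - Q ^ i)) / (pp Q i * pp Q (j+1))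
        = Q ^ (j+1) * (pp Q (2*N) * (1 - Q ^ i)) * (1 - Q^(i+1))
            / (pp Q (i+1) * pp Q (j+1)) := by
      rw [div_eq_div_iff (mul_ne_zero n1 (pp_ne_zero hQ _)) dD, pp_succ Q i]; ring
    have t3 : Q ^ (i+1) * (pp Q (2*N) * (1 - Q ^ j)) / (pp Q (i+1) * pp Q j)
        = Q ^ (i+1) * (pp Q (2*N) * (1 - Q ^ j)) * (1 - Q^(j+1))
            / (pp Q (i+1) * pp Q (j+1)) := by
      rw [div_eq_div_iff (mul_ne_zero (pp_ne_zero hQ _) n2) dD, pp_succ Q j]; ring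
    rw [t1, t2, t3, ← add_div, ← add_div]
    congr 1
    rw [show 2 * (N + 1) = (2 * N + 1) + 1 by ring, pp_succ, pp_succ]
    have hx : Q ^ (2 * N + 1) = Q ^ i * Q ^ j * Q := by
      rw [show 2 * N + 1 = i + j + 1 by omega, pow_add, pow_add, pow_one]
    have hx2 : Q ^ (2 * N + 1 + 1) = Q ^ i * Q ^ j * Q * Q := by
      rw [show 2 * N + 1 + 1 = i + j + 1 + 1 by omega, pow_add, pow_add, pow_add, pow_one]
    have hx3 : Q ^ (i + 1) = Q ^ i * Q := by rw [pow_add, pow_one]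
    have hx4 : Q ^ (j + 1) = Q ^ j * Q := by rw [pow_add, pow_one]
    rw [hx, hx2, hx3, hx4]
    ring
  · rcases lt_or_ge (N + 1) n.natAbs with hn2 | hn2
    · -- everything zero
      rw [gc_eq_zero (by omega), gc_eq_zero (by omega), gc_eq_zero (by omega),
        gc_eq_zero (by omega)]
      ring
    · -- boundary: n.natAbs = N + 1
      have habs : n.natAbs = N + 1 := by omega
      rcases le_or_gt 0 n with hpos | hneg
      · have hn3 : n = (N:ℤ) + 1 := by omega
        subst hn3
        have hz1 : gc Q N ((N:ℤ) + 1) = 0 := gc_eq_zero (by omega)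
        have hz2 : gc Q N ((N:ℤ) + 1 + 1) = 0 := gc_eq_zero (by omega)
        have h3 : gc Q N ((N:ℤ) + 1 - 1) = 1 := by
          rw [gc_eq (by omega),
            show ((N:ℤ) + ((N:ℤ) + 1 - 1)).toNat = 2 * N by omega,
            show ((N:ℤ) - ((N:ℤ) + 1 - 1)).toNat = 0 by omega,
            pp_zero, mul_one, div_self (pp_ne_zero hQ _)]
        have h4 : gc Q (N + 1) ((N:ℤ) + 1) = 1 := by
          rw [gc_eq (by omega),
            show (((N:ℕ) + 1 : ℕ) : ℤ) + ((N:ℤ) + 1) = ((2 * (N + 1) : ℕ) : ℤ) by push_cast; ring,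
            show (((N:ℕ) + 1 : ℕ) : ℤ) - ((N:ℤ) + 1) = 0 by push_cast; ring]
          simp only [Int.toNat_natCast, Int.toNat_zero, pp_zero, mul_one]
          exact div_self (pp_ne_zero hQ _)
        rw [h4, hz1, hz2, h3,
          show ((N:ℤ) + 1 - ((N:ℤ) + 1)).toNat = 0 by omega, pow_zero]
        ring
      · have hn3 : n = -((N:ℤ) + 1) := by omega
        subst hn3
        have hz1 : gc Q N (-((N:ℤ) + 1)) = 0 := gc_eq_zero (by omega)
        have hz2 : gc Q N (-((N:ℤ) + 1) - 1) = 0 := gc_eq_zero (by omega)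
        have h3 : gc Q N (-((N:ℤ) + 1) + 1) = 1 := by
          rw [gc_eq (by omega),
            show ((N:ℤ) + (-((N:ℤ) + 1) + 1)).toNat = 0 by omega,
            show ((N:ℤ) - (-((N:ℤ) + 1) + 1)).toNat = 2 * N by omega,
            pp_zero, one_mul, div_self (pp_ne_zero hQ _)]
        have h4 : gc Q (N + 1) (-((N:ℤ) + 1)) = 1 := by
          rw [gc_eq (by omega),
            show (((N:ℕ) + 1 : ℕ) : ℤ) + -((N:ℤ) + 1) = 0 by push_cast; ring,
            show (((N:ℕ) + 1 : ℕ) : ℤ) - -((N:ℤ) + 1) = ((2 * (N + 1) : ℕ) : ℤ) by push_cast; ring]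
          simp only [Int.toNat_natCast, Int.toNat_zero, pp_zero, one_mul]
          exact div_self (pp_ne_zero hQ _)
        rw [h4, hz1, hz2, h3,
          show ((N:ℤ) + 1 + -((N:ℤ) + 1)).toNat = 0 by omega, pow_zero]
        ring

lemma sum_shift_up (F : ℤ → ℂ) (M : ℕ) (h1 : F (-(M:ℤ)) = 0) (h2 : F ((M:ℤ) + 1) = 0) :
    ∑ n ∈ Finset.Icc (-(M:ℤ)) (M:ℤ), F (n + 1) = ∑ n ∈ Finset.Icc (-(M:ℤ)) (M:ℤ), F n := by
  have e : ∑ n ∈ Finset.Icc (-(M:ℤ)) (M:ℤ), F (n + 1)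
      = ∑ n ∈ Finset.Icc (-(M:ℤ) + 1) ((M:ℤ) + 1), F n := by
    rw [← Finset.map_add_right_Icc, Finset.sum_map]
    rfl
  rw [e]
  rw [Finset.sum_subset (Finset.Icc_subset_Icc (by omega) (by omega) :
      Finset.Icc (-(M:ℤ) + 1) ((M:ℤ) + 1) ⊆ Finset.Icc (-(M:ℤ)) ((M:ℤ) + 1))
    (fun x hx hx2 => by
      have : x = -(M:ℤ) := by simp only [Finset.mem_Icc] at hx hx2; omega
      rwa [this])]
  rw [Finset.sum_subset (Finset.Icc_subset_Icc (by omega) (by omega) :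
      Finset.Icc (-(M:ℤ)) ((M:ℤ)) ⊆ Finset.Icc (-(M:ℤ)) ((M:ℤ) + 1))
    (fun x hx hx2 => by
      have : x = (M:ℤ) + 1 := by simp only [Finset.mem_Icc] at hx hx2; omega
      rwa [this])]

lemma sum_shift_down (F : ℤ → ℂ) (M : ℕ) (h1 : F (-(M:ℤ) - 1) = 0) (h2 : F ((M:ℤ)) = 0) :
    ∑ n ∈ Finset.Icc (-(M:ℤ)) (M:ℤ), F (n - 1) = ∑ n ∈ Finset.Icc (-(M:ℤ)) (M:ℤ), F n := by
  have e : ∑ n ∈ Finset.Icc (-(M:ℤ)) (M:ℤ), F (n - 1)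
      = ∑ n ∈ Finset.Icc (-(M:ℤ) - 1) ((M:ℤ) - 1), F n := by
    rw [show -(M:ℤ) - 1 = -(M:ℤ) + -1 by ring, show (M:ℤ) - 1 = (M:ℤ) + -1 by ring,
      ← Finset.map_add_right_Icc, Finset.sum_map]
    rfl
  rw [e]
  rw [Finset.sum_subset (Finset.Icc_subset_Icc (by omega) (by omega) :
      Finset.Icc (-(M:ℤ) - 1) ((M:ℤ) - 1) ⊆ Finset.Icc (-(M:ℤ) - 1) ((M:ℤ)))
    (fun x hx hx2 => by
      have : x = (M:ℤ) := by simp only [Finset.mem_Icc] at hx hx2; omega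
      rwa [this])]
  rw [Finset.sum_subset (Finset.Icc_subset_Icc (by omega) (by omega) :
      Finset.Icc (-(M:ℤ)) ((M:ℤ)) ⊆ Finset.Icc (-(M:ℤ) - 1) ((M:ℤ)))
    (fun x hx hx2 => by
      have : x = -(M:ℤ) - 1 := by simp only [Finset.mem_Icc] at hx hx2; omega
      rwa [this])]

/-- The finite Jacobi triple product identity. -/
lemma finid (a b : ℂ) (hQ : ‖a * b‖ < 1) :
    ∀ N M : ℕ, N ≤ M →
    ∏ j ∈ Finset.range N, ((1 + a * (a*b) ^ j) * (1 + b * (a*b) ^ j))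
      = ∑ n ∈ Finset.Icc (-(M:ℤ)) (M:ℤ), gc (a*b) N n * jt a b n := by
  intro N
  induction N with
  | zero =>
    intro M _
    rw [Finset.sum_eq_single_of_mem 0 (by simp)]
    · have : gc (a*b) 0 0 = 1 := by
        rw [gc_eq (by simp)]
        norm_num [pp_zero]
      rw [this, one_mul]
      simp [jt, T]
    · intro n _ hn
      rw [gc_eq_zero (by omega), zero_mul]
  | succ N IH =>
    intro M hM
    have hM' : N ≤ M := by omega
    rw [Finset.prod_range_succ, IH M hM']
    have expand : (1 + a * (a*b) ^ N) * (1 + b * (a*b) ^ N)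
        = 1 + (a*b) ^ (2*N+1) + a * (a*b) ^ N + b * (a*b) ^ N := by
      rw [show 2*N+1 = N+N+1 by ring, pow_add, pow_add, pow_one]; ring
    rw [expand]
    rw [Finset.sum_mul]
    have split : ∀ n : ℤ, gc (a*b) N n * jt a b n *
          (1 + (a*b) ^ (2*N+1) + a * (a*b) ^ N + b * (a*b) ^ N)
        = (1 + (a*b) ^ (2*N+1)) * (gc (a*b) N n * jt a b n)
          + gc (a*b) N n * (a * (a*b) ^ N * jt a b n)
          + gc (a*b) N n * (b * (a*b) ^ N * jt a b n) := by
      intro n; ring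
    rw [Finset.sum_congr rfl fun n _ => split n]
    rw [Finset.sum_add_distrib, Finset.sum_add_distrib]
    -- rewrite the two shifted sums
    have hs2 : ∑ n ∈ Finset.Icc (-(M:ℤ)) (M:ℤ), gc (a*b) N n * (a * (a*b) ^ N * jt a b n)
        = ∑ n ∈ Finset.Icc (-(M:ℤ)) (M:ℤ),
            gc (a*b) N (n - 1) * ((a*b) ^ (((N:ℤ) + 1 - n).toNat) * jt a b n) := by
      have step : ∀ n ∈ Finset.Icc (-(M:ℤ)) (M:ℤ),
          gc (a*b) N n * (a * (a*b) ^ N * jt a b n)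
            = gc (a*b) N n * ((a*b) ^ (((N:ℤ) - n).toNat) * jt a b (n + 1)) := by
        intro n _
        rcases le_or_gt n (N:ℤ) with h | h
        · rw [jt_step_a a b h]
        · rw [gc_eq_zero (by omega), zero_mul, zero_mul]
      rw [Finset.sum_congr rfl step]
      have := sum_shift_up
        (fun n => gc (a*b) N (n - 1) * ((a*b) ^ (((N:ℤ) + 1 - n).toNat) * jt a b n)) M
        (by beta_reduce; rw [gc_eq_zero (by omega), zero_mul])
        (by beta_reduce; rw [gc_eq_zero (by omega), zero_mul])
      rw [← this]
      refine Finset.sum_congr rfl fun n _ => ?_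
      beta_reduce
      rw [show n + 1 - 1 = n by ring, show (N:ℤ) + 1 - (n + 1) = (N:ℤ) - n by ring]
    have hs3 : ∑ n ∈ Finset.Icc (-(M:ℤ)) (M:ℤ), gc (a*b) N n * (b * (a*b) ^ N * jt a b n)
        = ∑ n ∈ Finset.Icc (-(M:ℤ)) (M:ℤ),
            gc (a*b) N (n + 1) * ((a*b) ^ (((N:ℤ) + 1 + n).toNat) * jt a b n) := by
      have step : ∀ n ∈ Finset.Icc (-(M:ℤ)) (M:ℤ),
          gc (a*b) N n * (b * (a*b) ^ N * jt a b n)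
            = gc (a*b) N n * ((a*b) ^ (((N:ℤ) + n).toNat) * jt a b (n - 1)) := by
        intro n _
        rcases le_or_gt (-(N:ℤ)) n with h | h
        · rw [jt_step_b a b h]
        · rw [gc_eq_zero (by omega), zero_mul, zero_mul]
      rw [Finset.sum_congr rfl step]
      have := sum_shift_down
        (fun n => gc (a*b) N (n + 1) * ((a*b) ^ (((N:ℤ) + 1 + n).toNat) * jt a b n)) M
        (by beta_reduce; rw [gc_eq_zero (by omega), zero_mul])
        (by beta_reduce; rw [gc_eq_zero (by omega), zero_mul])
      rw [← this]
      refine Finset.sum_congr rfl fun n _ => ?_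
      beta_reduce
      rw [show n - 1 + 1 = n by ring, show (N:ℤ) + 1 + (n - 1) = (N:ℤ) + n by ring]
    rw [hs2, hs3, ← Finset.sum_add_distrib, ← Finset.sum_add_distrib]
    refine Finset.sum_congr rfl fun n _ => ?_
    rw [gc_rec hQ N n]
    ring


lemma norm_sum_fam {w : ℂ} (hw : ‖w‖ < 1) {c : ℕ → ℕ} (hc : ∀ n, n ≤ c n) :
    Summable fun n => ‖(1 - w ^ c n) - 1‖ := by
  have he : ∀ n : ℕ, ‖(1 - w ^ c n) - 1‖ = ‖w‖ ^ c n := by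
    intro n; rw [show (1 - w ^ c n) - 1 = -(w ^ c n) by ring, norm_neg, norm_pow]
  rw [funext he]
  exact summable_aux (norm_nonneg _) hw hc

lemma fam_ne_zero {w : ℂ} (hw : ‖w‖ < 1) {c : ℕ → ℕ} (hc : ∀ n, 1 ≤ c n) (n : ℕ) :
    1 - w ^ c n ≠ 0 := one_sub_ne_zero (norm_pow_lt_one hw (hc n))

lemma mult_fam {w : ℂ} (hw : ‖w‖ < 1) {c : ℕ → ℕ} (hc1 : ∀ n, 1 ≤ c n) (hc : ∀ n, n ≤ c n) :
    Multipliable fun n => 1 - w ^ c n :=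
  multipliable_of (fam_ne_zero hw hc1) (norm_sum_fam hw hc)

lemma multipliable_one_sub {Q : ℂ} (hQ : ‖Q‖ < 1) :
    Multipliable (fun n : ℕ => 1 - Q ^ (n + 1)) := by
  refine multipliable_of (fun n => one_sub_ne_zero (norm_pow_lt_one hQ (by omega))) ?_
  have : ∀ n : ℕ, ‖(1 - Q ^ (n+1)) - 1‖ = ‖Q‖ ^ (n+1) := by
    intro n
    rw [show (1 - Q ^ (n+1)) - 1 = -(Q ^ (n+1)) by ring, norm_neg, norm_pow]
  rw [funext this]
  exact summable_aux (norm_nonneg _) hQ fun n => by omega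

lemma pp_tendsto {Q : ℂ} (hQ : ‖Q‖ < 1) :
    Tendsto (fun m => pp Q m) atTop (𝓝 (∏' n : ℕ, (1 - Q ^ (n + 1)))) :=
  (multipliable_one_sub hQ).hasProd.tendsto_prod_nat

lemma tendsto_pp_shift {Q : ℂ} (hQ : ‖Q‖ < 1) (z : ℤ) :
    Tendsto (fun N : ℕ => pp Q ((N:ℤ) + z).toNat) atTop (𝓝 (∏' n : ℕ, (1 - Q ^ (n + 1)))) :=
  (pp_tendsto hQ).comp (tendsto_atTop_atTop.2 fun B => ⟨B + z.natAbs, fun c hc => by omega⟩)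

lemma tendsto_pp_two {Q : ℂ} (hQ : ‖Q‖ < 1) :
    Tendsto (fun N : ℕ => pp Q (2 * N)) atTop (𝓝 (∏' n : ℕ, (1 - Q ^ (n + 1)))) :=
  (pp_tendsto hQ).comp (tendsto_atTop_atTop.2 fun B => ⟨B, fun c hc => by omega⟩)

lemma tendsto_ppgc {Q : ℂ} (hQ : ‖Q‖ < 1) (n : ℤ) :
    Tendsto (fun N : ℕ => pp Q N * gc Q N n) atTop (𝓝 1) := by
  set L := ∏' n : ℕ, (1 - Q ^ (n + 1)) with hL
  have hLne : L ≠ 0 := by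
    rw [hL]
    exact tprod_ne_zero (fun n => one_sub_ne_zero (norm_pow_lt_one hQ (by omega)))
      (norm_sum_fam hQ (fun n => by omega))
  have h1 : Tendsto (fun N : ℕ =>
      pp Q N * (pp Q (2 * N) / (pp Q ((N:ℤ) + n).toNat * pp Q ((N:ℤ) - n).toNat)))
      atTop (𝓝 (L * (L / (L * L)))) := by
    exact (pp_tendsto hQ).mul ((tendsto_pp_two hQ).div
      ((tendsto_pp_shift hQ n).mul (tendsto_pp_shift hQ (-n))) (mul_ne_zero hLne hLne))
  have h2 : L * (L / (L * L)) = 1 := by field_simp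
  rw [h2] at h1
  refine h1.congr' ?_
  filter_upwards [eventually_atTop.2 ⟨n.natAbs, fun N hN => hN⟩] with N hN
  rw [gc_eq hN]

lemma T_add_T_neg (n : ℤ) : T n + T (-n) = n * n := by
  obtain ⟨m, hm⟩ := Int.even_mul_succ_self n
  have h1 : -n * (-n + 1) = n * n - n * (n + 1) + n * n := by ring
  unfold T; omega

lemma jt_norm_le {a b : ℂ} (ha : ‖a‖ < 1) (hb : ‖b‖ < 1) (n : ℤ) :
    ‖jt a b n‖ ≤ (max ‖a‖ ‖b‖) ^ n.natAbs := by
  set ρ := max ‖a‖ ‖b‖ with hρ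
  have hρ0 : 0 ≤ ρ := le_trans (norm_nonneg a) (le_max_left _ _)
  have hρ1 : ρ < 1 := max_lt ha hb
  have hT : (T n).toNat + (T (-n)).toNat = n.natAbs * n.natAbs := by
    have h1 := T_add_T_neg n
    have h2 := T_nonneg n
    have h3 := T_nonneg (-n)
    have h4 : n * n = (n.natAbs : ℤ) * n.natAbs := by
      rw [← Int.natAbs_mul_self]; push_cast; ring
    omega
  rw [jt, zpow_T a n, zpow_T b (-n), norm_mul, norm_pow, norm_pow]
  calc ‖a‖ ^ (T n).toNat * ‖b‖ ^ (T (-n)).toNat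
      ≤ ρ ^ (T n).toNat * ρ ^ (T (-n)).toNat :=
        mul_le_mul (pow_le_pow_left₀ (norm_nonneg a) (le_max_left _ _) _)
          (pow_le_pow_left₀ (norm_nonneg b) (le_max_right _ _) _)
          (pow_nonneg (norm_nonneg b) _) (pow_nonneg hρ0 _)
    _ = ρ ^ ((T n).toNat + (T (-n)).toNat) := (pow_add _ _ _).symm
    _ = ρ ^ (n.natAbs * n.natAbs) := by rw [hT]
    _ ≤ ρ ^ n.natAbs := pow_le_pow_of_le_one hρ0 hρ1.le (by nlinarith [Nat.zero_le n.natAbs])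

lemma summable_rho_int {ρ : ℝ} (hρ0 : 0 ≤ ρ) (hρ1 : ρ < 1) :
    Summable (fun n : ℤ => ρ ^ n.natAbs) := by
  refine Summable.of_nat_of_neg ?_ ?_ <;>
    simpa using summable_geometric_of_lt_one hρ0 hρ1

/-- uniform bound on the coefficients -/
lemma ppgc_norm_le {Q : ℂ} (hQ : ‖Q‖ < 1) (N : ℕ) (n : ℤ) :
    ‖pp Q N * gc Q N n‖ ≤
      (Real.exp (S ‖Q‖)) ^ 2 / (Real.exp (-(S ‖Q‖ / (1 - ‖Q‖)))) ^ 2 := by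
  set U := Real.exp (S ‖Q‖) with hU
  set V := Real.exp (-(S ‖Q‖ / (1 - ‖Q‖))) with hV
  have hV0 : 0 < V := Real.exp_pos _
  have hU0 : 0 < U := Real.exp_pos _
  rcases le_or_gt n.natAbs N with h | h
  · rw [gc_eq h, norm_mul, norm_div, norm_mul]
    have h1 : ‖pp Q N‖ * ‖pp Q (2*N)‖ ≤ U ^ 2 := by
      calc ‖pp Q N‖ * ‖pp Q (2*N)‖ ≤ U * U := by
            exact mul_le_mul (pp_norm_le hQ N) (pp_norm_le hQ (2*N)) (norm_nonneg _) hU0.le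
        _ = U ^ 2 := (sq U).symm
    have h2 : V ^ 2 ≤ ‖pp Q ((N:ℤ) + n).toNat‖ * ‖pp Q ((N:ℤ) - n).toNat‖ := by
      calc V ^ 2 = V * V := sq V
        _ ≤ _ := mul_le_mul (pp_norm_ge hQ _) (pp_norm_ge hQ _) hV0.le (norm_nonneg _)
    rw [mul_div_assoc']
    exact div_le_div₀ (by positivity) h1 (by positivity) h2
  · rw [gc_eq_zero h, mul_zero, norm_zero]
    positivity

lemma three_prod_bound {x y z : ℂ} {t : ℝ} (ht : t ≤ 1) (hx : ‖x‖ ≤ t) (hy : ‖y‖ ≤ t)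
    (hz : ‖z‖ ≤ t) : ‖(1 + x) * ((1 + y) * (1 + z)) - 1‖ ≤ 7 * t := by
  have ht0 : 0 ≤ t := le_trans (norm_nonneg x) hx
  have expand : (1 + x) * ((1 + y) * (1 + z)) - 1 = x + y + z + x*y + y*z + x*z + x*y*z := by
    ring
  rw [expand]
  have h1 : ‖x*y‖ ≤ t := by
    rw [norm_mul]
    calc ‖x‖ * ‖y‖ ≤ t * 1 := mul_le_mul hx (hy.trans ht) (norm_nonneg _) ht0
    _ = t := mul_one t
  have h2 : ‖y*z‖ ≤ t := by
    rw [norm_mul]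
    calc ‖y‖ * ‖z‖ ≤ t * 1 := mul_le_mul hy (hz.trans ht) (norm_nonneg _) ht0
    _ = t := mul_one t
  have h3 : ‖x*z‖ ≤ t := by
    rw [norm_mul]
    calc ‖x‖ * ‖z‖ ≤ t * 1 := mul_le_mul hx (hz.trans ht) (norm_nonneg _) ht0
    _ = t := mul_one t
  have h4 : ‖x*y*z‖ ≤ t := by
    rw [norm_mul]
    calc ‖x*y‖ * ‖z‖ ≤ t * 1 := mul_le_mul h1 (hz.trans ht) (norm_nonneg _) ht0
    _ = t := mul_one t
  have n1 := norm_add_le (x+y+z+x*y+y*z+x*z) (x*y*z)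
  have n2 := norm_add_le (x+y+z+x*y+y*z) (x*z)
  have n3 := norm_add_le (x+y+z+x*y) (y*z)
  have n4 := norm_add_le (x+y+z) (x*y)
  have n5 := norm_add_le (x+y) z
  have n6 := norm_add_le x y
  linarith

/-- The Jacobi triple product identity. -/
theorem jtp {a b : ℂ} (ha : ‖a‖ < 1) (hb : ‖b‖ < 1) :
    ∑' n : ℤ, jt a b n
      = ∏' n : ℕ, ((1 - (a*b) ^ (n+1)) * ((1 + a * (a*b) ^ n) * (1 + b * (a*b) ^ n))) := by
  have hQ : ‖a * b‖ < 1 := by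
    rw [norm_mul]
    calc ‖a‖ * ‖b‖ ≤ ‖a‖ * 1 := by gcongr
    _ = ‖a‖ := mul_one _
    _ < 1 := ha
  set Q := a * b with hQdef
  set ρ := max ‖a‖ ‖b‖ with hρ
  have hρ0 : 0 ≤ ρ := le_trans (norm_nonneg a) (le_max_left _ _)
  have hρ1 : ρ < 1 := max_lt ha hb
  -- the product family
  set u : ℕ → ℂ := fun n => (1 - Q ^ (n+1)) * ((1 + a * Q ^ n) * (1 + b * Q ^ n)) with hu
  have hone_add : ∀ (c : ℂ), ‖c‖ < 1 → ∀ m : ℕ, (1 + c * Q ^ m) ≠ 0 := by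
    intro c hc m
    have : ‖-(c * Q ^ m)‖ < 1 := by
      rw [norm_neg, norm_mul, norm_pow]
      calc ‖c‖ * ‖Q‖ ^ m ≤ ‖c‖ * 1 := by
            gcongr
            exact pow_le_one₀ (norm_nonneg _) hQ.le
      _ = ‖c‖ := mul_one _
      _ < 1 := hc
    have h2 := one_sub_ne_zero this
    rwa [sub_neg_eq_add] at h2
  have hu_ne : ∀ n, u n ≠ 0 := fun n =>
    mul_ne_zero (one_sub_ne_zero (norm_pow_lt_one hQ (by omega)))
      (mul_ne_zero (hone_add a ha n) (hone_add b hb n))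
  have hu_sum : Summable fun n => ‖u n - 1‖ := by
    have key : ∀ n : ℕ, ‖u n - 1‖ ≤ 7 * ‖Q‖ ^ n := by
      intro n
      have htn : ‖Q‖ ^ n ≤ 1 := pow_le_one₀ (norm_nonneg _) hQ.le
      have ht1 : ‖-(Q ^ (n+1))‖ ≤ ‖Q‖ ^ n := by
        rw [norm_neg, norm_pow, pow_succ]
        calc ‖Q‖ ^ n * ‖Q‖ ≤ ‖Q‖ ^ n * 1 := by gcongr
        _ = ‖Q‖ ^ n := mul_one _
      have ht2 : ‖a * Q ^ n‖ ≤ ‖Q‖ ^ n := by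
        rw [norm_mul, norm_pow]
        calc ‖a‖ * ‖Q‖ ^ n ≤ 1 * ‖Q‖ ^ n := by gcongr
        _ = ‖Q‖ ^ n := one_mul _
      have ht3 : ‖b * Q ^ n‖ ≤ ‖Q‖ ^ n := by
        rw [norm_mul, norm_pow]
        calc ‖b‖ * ‖Q‖ ^ n ≤ 1 * ‖Q‖ ^ n := by gcongr
        _ = ‖Q‖ ^ n := one_mul _
      have hform : u n = (1 + -(Q ^ (n+1))) * ((1 + a * Q ^ n) * (1 + b * Q ^ n)) := by
        show (1 - Q ^ (n+1)) * ((1 + a * Q ^ n) * (1 + b * Q ^ n)) = _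
        ring
      rw [hform]
      exact three_prod_bound htn ht1 ht2 ht3
    refine Summable.of_nonneg_of_le (fun n => norm_nonneg _) key ?_
    exact (summable_geometric_of_lt_one (norm_nonneg _) hQ).mul_left 7
  have hu_mult : Multipliable u := multipliable_of hu_ne hu_sum
  -- LHS sequence
  have key1 : ∀ N : ℕ, ∏ j ∈ Finset.range N, u j
      = ∑' n : ℤ, pp Q N * (gc Q N n * jt a b n) := by
    intro N
    have e1 : ∏ j ∈ Finset.range N, u j
        = pp Q N * ∏ j ∈ Finset.range N, ((1 + a * Q ^ j) * (1 + b * Q ^ j)) := by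
      rw [pp, ← Finset.prod_mul_distrib]
    have e2 : ∑' n : ℤ, pp Q N * (gc Q N n * jt a b n)
        = ∑ n ∈ Finset.Icc (-(N:ℤ)) (N:ℤ), pp Q N * (gc Q N n * jt a b n) := by
      refine tsum_eq_sum fun n hn => ?_
      rw [Finset.mem_Icc, not_and_or] at hn
      have : N < n.natAbs := by omega
      rw [gc_eq_zero this, zero_mul, mul_zero]
    rw [e1, e2, ← Finset.mul_sum]
    congr 1
    rw [hQdef]
    exact finid a b hQ N N le_rfl
  have key2 : Tendsto (fun N => ∑' n : ℤ, pp Q N * (gc Q N n * jt a b n)) atTop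
      (𝓝 (∑' n : ℤ, jt a b n)) := by
    refine tendsto_tsum_of_dominated_convergence
      (bound := fun n : ℤ => ((Real.exp (S ‖Q‖)) ^ 2 / (Real.exp (-(S ‖Q‖ / (1 - ‖Q‖)))) ^ 2)
        * ρ ^ n.natAbs) ?_ ?_ ?_
    · exact (summable_rho_int hρ0 hρ1).mul_left _
    · intro n
      have h1 := (tendsto_ppgc hQ n).mul_const (jt a b n)
      rw [one_mul] at h1
      refine h1.congr fun N => by ring
    · refine Eventually.of_forall fun N n => ?_
      calc ‖pp Q N * (gc Q N n * jt a b n)‖ = ‖pp Q N * gc Q N n‖ * ‖jt a b n‖ := by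
            rw [← norm_mul]; ring_nf
        _ ≤ _ := mul_le_mul (ppgc_norm_le hQ N n) (jt_norm_le ha hb n) (norm_nonneg _)
            (by positivity)
  have key3 : Tendsto (fun N => ∏ j ∈ Finset.range N, u j) atTop (𝓝 (∏' n, u n)) :=
    hu_mult.hasProd.tendsto_prod_nat
  rw [funext key1] at key3
  exact tendsto_nhds_unique key2 key3



lemma block5 {g : ℕ → ℂ} (hg : Summable g)
    (hb : Summable fun m => g (5*m) + g (5*m+1) + g (5*m+2) + g (5*m+3) + g (5*m+4)) :
    ∑' n, g n = ∑' m, (g (5*m) + g (5*m+1) + g (5*m+2) + g (5*m+3) + g (5*m+4)) := by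
  have fin : ∀ N : ℕ, ∑ n ∈ Finset.range (5*N), g n
      = ∑ m ∈ Finset.range N, (g (5*m) + g (5*m+1) + g (5*m+2) + g (5*m+3) + g (5*m+4)) := by
    intro N
    induction N with
    | zero => simp
    | succ N IH =>
      rw [show 5*(N+1) = 5*N + 5 by ring, Finset.sum_range_add, IH, Finset.sum_range_succ]
      simp only [Finset.sum_range_succ, Finset.sum_range_zero, Nat.add_zero, zero_add]
  have t1 : Tendsto (fun N => ∑ n ∈ Finset.range (5*N), g n) atTop (𝓝 (∑' n, g n)) :=
    hg.hasSum.tendsto_sum_nat.comp (tendsto_atTop_atTop.2 fun B => ⟨B, fun c hc => by omega⟩)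
  have t2 := hb.hasSum.tendsto_sum_nat
  rw [funext fin] at t1
  exact tendsto_nhds_unique t1 t2

/-- Splitting the Euler product by residues mod 5. -/
lemma euler_split {w : ℂ} (hw : ‖w‖ < 1) :
    ∏' n : ℕ, (1 - w ^ (n + 1))
      = (∏' m : ℕ, (1 - w ^ (5*m+1))) * (∏' m : ℕ, (1 - w ^ (5*m+2)))
        * (∏' m : ℕ, (1 - w ^ (5*m+3))) * (∏' m : ℕ, (1 - w ^ (5*m+4)))
        * (∏' m : ℕ, (1 - w ^ (5*m+5))) := by
  have hg : Summable fun n => ‖(1 - w ^ (n + 1)) - 1‖ :=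
    norm_sum_fam hw (fun n => by omega)
  have hgne : ∀ n : ℕ, 1 - w ^ (n + 1) ≠ 0 := fam_ne_zero hw (fun n => by omega)
  have hlog : Summable fun n => Complex.log (1 - w ^ (n + 1)) := summable_log hg
  have hrs : ∀ r : ℕ, Summable fun m => Complex.log (1 - w ^ (5*m+r+1)) :=
    fun r => summable_log (norm_sum_fam hw (fun n => by omega))
  have hb : Summable fun m : ℕ =>
      Complex.log (1 - w ^ (5*m+1)) + Complex.log (1 - w ^ (5*m+1+1))
        + Complex.log (1 - w ^ (5*m+2+1)) + Complex.log (1 - w ^ (5*m+3+1))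
        + Complex.log (1 - w ^ (5*m+4+1)) :=
    ((((hrs 0).add (hrs 1)).add (hrs 2)).add (hrs 3)).add (hrs 4)
  have key := block5 hlog hb
  rw [tprod_eq_exp hgne hg, key]
  rw [Summable.tsum_add ((((hrs 0).add (hrs 1)).add (hrs 2)).add (hrs 3)) (hrs 4),
    Summable.tsum_add (((hrs 0).add (hrs 1)).add (hrs 2)) (hrs 3),
    Summable.tsum_add ((hrs 0).add (hrs 1)) (hrs 2),
    Summable.tsum_add (hrs 0) (hrs 1)]
  rw [Complex.exp_add, Complex.exp_add, Complex.exp_add, Complex.exp_add]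
  have hpr : ∀ r : ℕ, (∏' m : ℕ, (1 - w ^ (5*m+r+1)))
      = Complex.exp (∑' m, Complex.log (1 - w ^ (5*m+r+1))) :=
    fun r => tprod_eq_exp (fam_ne_zero hw (fun n => by omega))
      (norm_sum_fam hw (fun n => by omega))
  rw [show (fun m : ℕ => (1 - w ^ (5*m+1))) = (fun m : ℕ => (1 - w ^ (5*m+0+1))) by
      funext m; norm_num,
    show (fun m : ℕ => (1 - w ^ (5*m+2))) = (fun m : ℕ => (1 - w ^ (5*m+1+1))) by
      funext m; norm_num,
    show (fun m : ℕ => (1 - w ^ (5*m+3))) = (fun m : ℕ => (1 - w ^ (5*m+2+1))) by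
      funext m; norm_num,
    show (fun m : ℕ => (1 - w ^ (5*m+4))) = (fun m : ℕ => (1 - w ^ (5*m+3+1))) by
      funext m; norm_num,
    show (fun m : ℕ => (1 - w ^ (5*m+5))) = (fun m : ℕ => (1 - w ^ (5*m+4+1))) by
      funext m; norm_num]
  rw [hpr 0, hpr 1, hpr 2, hpr 3, hpr 4]

/-- multipliability of the inverse Rogers–Ramanujan family -/
lemma mult_inv_fam {w : ℂ} (hw : ‖w‖ < 1) :
    Multipliable (fun m : ℕ => ((1 - w ^ (5*m+3)) * (1 - w ^ (5*m+2)))⁻¹) := by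
  have hxne : ∀ m : ℕ, (1 - w ^ (5*m+3)) * (1 - w ^ (5*m+2)) ≠ 0 := fun m =>
    mul_ne_zero (fam_ne_zero hw (c := fun m => 5*m+3) (fun n => by show 1 ≤ 5*n+3; omega) m)
      (fam_ne_zero hw (c := fun m => 5*m+2) (fun n => by show 1 ≤ 5*n+2; omega) m)
  refine multipliable_of (fun m => inv_ne_zero (hxne m)) ?_
  have hb : ∀ m : ℕ, ‖((1 - w ^ (5*m+3)) * (1 - w ^ (5*m+2)))⁻¹ - 1‖
      ≤ (3 / (1 - ‖w‖) ^ 2) * ‖w‖ ^ m := by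
    intro m
    set x := w ^ (5*m+3) with hx
    set y := w ^ (5*m+2) with hy
    have hw1 : ‖w‖ ≤ 1 := hw.le
    have hxm : ‖x‖ ≤ ‖w‖ ^ m := by
      rw [hx, norm_pow]; exact pow_le_pow_of_le_one (norm_nonneg _) hw1 (by omega)
    have hym : ‖y‖ ≤ ‖w‖ ^ m := by
      rw [hy, norm_pow]; exact pow_le_pow_of_le_one (norm_nonneg _) hw1 (by omega)
    have hm1 : ‖w‖ ^ m ≤ 1 := pow_le_one₀ (norm_nonneg _) hw1
    have hxw : ‖x‖ ≤ ‖w‖ := by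
      rw [hx, norm_pow]
      calc ‖w‖ ^ (5*m+3) ≤ ‖w‖ ^ 1 := pow_le_pow_of_le_one (norm_nonneg _) hw1 (by omega)
      _ = ‖w‖ := pow_one _
    have hyw : ‖y‖ ≤ ‖w‖ := by
      rw [hy, norm_pow]
      calc ‖w‖ ^ (5*m+2) ≤ ‖w‖ ^ 1 := pow_le_pow_of_le_one (norm_nonneg _) hw1 (by omega)
      _ = ‖w‖ := pow_one _
    have h1x : 1 - ‖w‖ ≤ ‖1 - x‖ := by
      have := norm_sub_norm_le (1 : ℂ) x
      simp only [norm_one] at this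
      linarith
    have h1y : 1 - ‖w‖ ≤ ‖1 - y‖ := by
      have := norm_sub_norm_le (1 : ℂ) y
      simp only [norm_one] at this
      linarith
    have hwpos : 0 < 1 - ‖w‖ := by linarith
    have hzne := mul_ne_zero (fam_ne_zero hw (c := fun m => 5*m+3) (fun n => by show 1 ≤ 5*n+3; omega) m)
      (fam_ne_zero hw (c := fun m => 5*m+2) (fun n => by show 1 ≤ 5*n+2; omega) m)
    have hid : ((1 - x) * (1 - y))⁻¹ - 1 = (x + y - x*y) * ((1 - x) * (1 - y))⁻¹ := by
      have h' : (x + y - x*y) = (1 - (1-x)*(1-y)) := by ring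
      have hzne' : (1-x)*(1-y) ≠ 0 := by rw [hx, hy]; exact hzne
      rw [h', sub_mul 1 ((1-x)*(1-y)), one_mul, mul_inv_cancel₀ hzne']
    rw [hid, norm_mul, norm_inv, norm_mul]
    have hnum : ‖x + y - x*y‖ ≤ 3 * ‖w‖ ^ m := by
      calc ‖x + y - x*y‖ ≤ ‖x + y‖ + ‖x*y‖ := norm_sub_le _ _
        _ ≤ ‖x‖ + ‖y‖ + ‖x‖*‖y‖ := by rw [norm_mul]; gcongr; exact norm_add_le _ _
        _ ≤ ‖w‖^m + ‖w‖^m + ‖w‖^m * 1 := by gcongr; exact le_trans hym hm1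
        _ = 3 * ‖w‖ ^ m := by ring
    have hden : (‖1 - x‖ * ‖1 - y‖)⁻¹ ≤ ((1 - ‖w‖) ^ 2)⁻¹ := by
      have hpx : (0:ℝ) < ‖1 - x‖ :=
        norm_pos_iff.2 (fam_ne_zero hw (c := fun m => 5*m+3) (fun n => by show 1 ≤ 5*n+3; omega) m)
      have hpy : (0:ℝ) < ‖1 - y‖ :=
        norm_pos_iff.2 (fam_ne_zero hw (c := fun m => 5*m+2) (fun n => by show 1 ≤ 5*n+2; omega) m)
      rw [inv_le_inv₀ (by positivity) (by positivity)]
      calc (1 - ‖w‖) ^ 2 = (1 - ‖w‖) * (1 - ‖w‖) := sq _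
        _ ≤ ‖1 - x‖ * ‖1 - y‖ := by
            refine mul_le_mul h1x h1y hwpos.le (norm_nonneg _)
    calc ‖x + y - x*y‖ * (‖1 - x‖ * ‖1 - y‖)⁻¹
        ≤ (3 * ‖w‖ ^ m) * ((1 - ‖w‖) ^ 2)⁻¹ := by
          refine mul_le_mul hnum hden (by positivity) (by positivity)
      _ = (3 / (1 - ‖w‖) ^ 2) * ‖w‖ ^ m := by ring
  refine Summable.of_nonneg_of_le (fun m => norm_nonneg _) hb ?_
  exact (summable_geometric_of_lt_one (norm_nonneg _) hw).mul_left _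

/-- the full product-splitting identity -/
lemma split_prod {w : ℂ} (hw : ‖w‖ < 1) :
    (∏' n : ℕ, (1 - w ^ (n + 1)))
      * (∏' n : ℕ, ((1 - w ^ (5*n+3)) * (1 - w ^ (5*n+2)))⁻¹)
      = ∏' n : ℕ, ((1 - w ^ (5*n+5)) * ((1 - w ^ (5*n+4)) * (1 - w ^ (5*n+1)))) := by
  have m1 := mult_fam hw (c := fun m => 5*m+1) (fun n => by show 1 ≤ 5*n+1; omega) (fun n => by show n ≤ 5*n+1; omega)
  have m2 := mult_fam hw (c := fun m => 5*m+2) (fun n => by show 1 ≤ 5*n+2; omega) (fun n => by show n ≤ 5*n+2; omega)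
  have m3 := mult_fam hw (c := fun m => 5*m+3) (fun n => by show 1 ≤ 5*n+3; omega) (fun n => by show n ≤ 5*n+3; omega)
  have m4 := mult_fam hw (c := fun m => 5*m+4) (fun n => by show 1 ≤ 5*n+4; omega) (fun n => by show n ≤ 5*n+4; omega)
  have m5 := mult_fam hw (c := fun m => 5*m+5) (fun n => by show 1 ≤ 5*n+5; omega) (fun n => by show n ≤ 5*n+5; omega)
  have minv := mult_inv_fam hw
  have hzne : ∀ m : ℕ, (1 - w ^ (5*m+3)) * (1 - w ^ (5*m+2)) ≠ 0 := fun m =>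
    mul_ne_zero (fam_ne_zero hw (c := fun m => 5*m+3) (fun n => by show 1 ≤ 5*n+3; omega) m)
      (fam_ne_zero hw (c := fun m => 5*m+2) (fun n => by show 1 ≤ 5*n+2; omega) m)
  -- the inverse product cancels P3 * P2
  have hcancel : (∏' n : ℕ, ((1 - w ^ (5*n+3)) * (1 - w ^ (5*n+2)))⁻¹)
      * ((∏' m : ℕ, (1 - w ^ (5*m+3))) * (∏' m : ℕ, (1 - w ^ (5*m+2)))) = 1 := by
    rw [← Multipliable.tprod_mul m3 m2, ← Multipliable.tprod_mul minv (m3.mul m2)]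
    have : ∀ n : ℕ, ((1 - w ^ (5*n+3)) * (1 - w ^ (5*n+2)))⁻¹
        * ((1 - w ^ (5*n+3)) * (1 - w ^ (5*n+2))) = 1 := fun n => inv_mul_cancel₀ (hzne n)
    rw [tprod_congr this, tprod_one]
  have hsplit := euler_split hw
  -- RHS merge
  have hmerge : ∏' n : ℕ, ((1 - w ^ (5*n+5)) * ((1 - w ^ (5*n+4)) * (1 - w ^ (5*n+1))))
      = (∏' m : ℕ, (1 - w ^ (5*m+5))) * ((∏' m : ℕ, (1 - w ^ (5*m+4)))
          * (∏' m : ℕ, (1 - w ^ (5*m+1)))) := by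
    rw [← Multipliable.tprod_mul m4 m1, ← Multipliable.tprod_mul m5 (m4.mul m1)]
  rw [hsplit, hmerge]
  calc (∏' m : ℕ, (1 - w ^ (5*m+1))) * (∏' m : ℕ, (1 - w ^ (5*m+2)))
        * (∏' m : ℕ, (1 - w ^ (5*m+3))) * (∏' m : ℕ, (1 - w ^ (5*m+4)))
        * (∏' m : ℕ, (1 - w ^ (5*m+5)))
        * (∏' n : ℕ, ((1 - w ^ (5*n+3)) * (1 - w ^ (5*n+2)))⁻¹)
      = ((∏' m : ℕ, (1 - w ^ (5*m+5))) * ((∏' m : ℕ, (1 - w ^ (5*m+4)))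
          * (∏' m : ℕ, (1 - w ^ (5*m+1)))))
        * ((∏' n : ℕ, ((1 - w ^ (5*n+3)) * (1 - w ^ (5*n+2)))⁻¹)
            * ((∏' m : ℕ, (1 - w ^ (5*m+3))) * (∏' m : ℕ, (1 - w ^ (5*m+2))))) := by ring
    _ = _ := by rw [hcancel, mul_one]

/-- specializing the JTP product -/
lemma jtp_spec {w : ℂ} (hw : ‖w‖ < 1) :
    ∑' n : ℤ, jt (-(w^4)) (-w) n
      = ∏' n : ℕ, ((1 - w ^ (5*n+5)) * ((1 - w ^ (5*n+4)) * (1 - w ^ (5*n+1)))) := by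
  have hw1 : ‖w‖ ≤ 1 := hw.le
  have ha : ‖-(w^4)‖ < 1 := by
    rw [norm_neg, norm_pow]
    calc ‖w‖ ^ 4 ≤ ‖w‖ ^ 1 := pow_le_pow_of_le_one (norm_nonneg _) hw1 (by omega)
    _ = ‖w‖ := pow_one _
    _ < 1 := hw
  have hb : ‖-w‖ < 1 := by rwa [norm_neg]
  rw [jtp ha hb]
  refine tprod_congr fun n => ?_
  have hQ : -(w^4) * -w = w^5 := by ring
  rw [hQ, ← pow_mul, ← pow_mul]
  rw [show 5*(n+1) = 5*n+5 by ring]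
  rw [pow_add w (5*n) 5, pow_add w (5*n) 4, pow_add w (5*n) 1]
  ring

/-- the summand specialization -/
lemma jt_spec {w : ℂ} (hw : w ≠ 0) (n : ℤ) :
    jt (-(w^4)) (-w) n = (-1 : ℂ) ^ n * w ^ (n*(5*n+3)/2) := by
  have hT : 4 * T n + T (-n) = n*(5*n+3)/2 := by
    obtain ⟨m, hm⟩ := Int.even_mul_succ_self n
    have h1 : -n * (-n + 1) = n*n - n*(n+1) + n*n := by ring
    have h2 : n*(5*n+3) = 4*(n*(n+1)) + (n*n - n*(n+1) + n*n) := by ring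
    unfold T; omega
  have e1 : (-(w^4) : ℂ) = (-1) * w^4 := by ring
  have e2 : (-w : ℂ) = (-1) * w := by ring
  rw [jt, e1, e2, mul_zpow, mul_zpow]
  have e3 : (w^4 : ℂ) ^ T n = w ^ (4 * T n) := by
    rw [← zpow_natCast w 4, ← zpow_mul]
    norm_num
  have e4 : (w : ℂ) ^ T (-n) = w ^ (T (-n)) := rfl
  rw [e3]
  have e5 : ((-1 : ℂ) ^ T n) * ((-1 : ℂ) ^ T (-n)) = (-1 : ℂ) ^ (T n + T (-n)) :=
    (zpow_add₀ (by norm_num) _ _).symm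
  have e6 : w ^ (4 * T n) * w ^ T (-n) = w ^ (4 * T n + T (-n)) := (zpow_add₀ hw _ _).symm
  calc (-1 : ℂ) ^ T n * w ^ (4 * T n) * ((-1 : ℂ) ^ T (-n) * w ^ T (-n))
      = ((-1 : ℂ) ^ T n * (-1 : ℂ) ^ T (-n)) * (w ^ (4 * T n) * w ^ T (-n)) := by ring
    _ = (-1 : ℂ) ^ (T n + T (-n)) * w ^ (4 * T n + T (-n)) := by rw [e5, e6]
    _ = (-1 : ℂ) ^ (n * n) * w ^ (n*(5*n+3)/2) := by rw [T_add_T_neg, hT]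
    _ = (-1 : ℂ) ^ n * w ^ (n*(5*n+3)/2) := by
        congr 1
        obtain ⟨k, hk⟩ | ⟨k, hk⟩ := Int.even_or_odd n
        · have h1 : (-1 : ℂ) ^ n = 1 := by
            rw [hk, zpow_add₀ (by norm_num : (-1:ℂ) ≠ 0), ← mul_zpow]
            norm_num
          rw [zpow_mul, h1, one_zpow]
        · have h1 : (-1 : ℂ) ^ n = -1 := by
            rw [hk, zpow_add₀ (by norm_num : (-1:ℂ) ≠ 0), zpow_mul]
            norm_num
          rw [zpow_mul, h1]
          exact h1

end JTPAux

open JTPAux in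
theorem bPhi_part_two_mod_three (q : ℂ) (hq : ‖q‖ < 1) :
    ∑' k : {n : ℤ // n % 3 = 2},
        (-1 : ℂ) ^ (k : ℤ) * q ^ ((k : ℤ) * (5 * (k : ℤ) + 1) / 2) =
      -q ^ 2 * eulerPhi (q ^ 9) * rrA (q ^ 9) := by
  by_cases hq0 : q = 0
  · subst hq0
    have hz : ∀ k : {n : ℤ // n % 3 = 2},
        (-1 : ℂ) ^ (k : ℤ) * (0 : ℂ) ^ ((k : ℤ) * (5 * (k : ℤ) + 1) / 2) = 0 := by
      rintro ⟨k, hk⟩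
      have hk0 : k ≠ 0 := by omega
      have hne : k * (5 * k + 1) / 2 ≠ 0 := by
        obtain ⟨m, hm⟩ := Int.even_mul_succ_self k
        have h1 : k * (5 * k + 1) = 5 * (k * (k + 1)) - 4 * k := by ring
        have h2 : k * (5 * k + 1) ≠ 0 := mul_ne_zero hk0 (by omega)
        omega
      rw [zero_zpow _ hne, mul_zero]
    rw [tsum_congr hz, tsum_zero]
    norm_num
  · set w : ℂ := q ^ 9 with hwdef
    have hw : ‖w‖ < 1 := by
      rw [hwdef, norm_pow]
      exact pow_lt_one₀ (norm_nonneg _) hq (by omega)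
    have hwne : w ≠ 0 := pow_ne_zero _ hq0
    -- reindex by the equivalence n ↦ -3n-1
    let e : ℤ ≃ {n : ℤ // n % 3 = 2} :=
      { toFun := fun n => ⟨-3*n - 1, by omega⟩
        invFun := fun k => -((k : ℤ) + 1) / 3
        left_inv := fun n => by show -((-3*n - 1) + 1) / 3 = n; omega
        right_inv := fun k => Subtype.ext (by
          show -3 * (-((k : ℤ) + 1) / 3) - 1 = (k : ℤ)
          have := k.2
          omega) }
    rw [← e.tsum_eq (fun k : {n : ℤ // n % 3 = 2} =>
      (-1 : ℂ) ^ (k : ℤ) * q ^ ((k : ℤ) * (5 * (k : ℤ) + 1) / 2))]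
    have hterm : ∀ n : ℤ,
        (-1 : ℂ) ^ ((e n : ℤ)) * q ^ ((e n : ℤ) * (5 * (e n : ℤ) + 1) / 2)
          = -(q ^ 2 * jt (-(w^4)) (-w) n) := by
      intro n
      have hcoe : ((e n : ℤ)) = -3*n - 1 := rfl
      rw [hcoe]
      have t1 : (-1 : ℂ) ^ (-3*n - 1 : ℤ) = -((-1 : ℂ) ^ n) := by
        rw [show (-3*n - 1 : ℤ) = (-3)*n + (-1) by ring,
          zpow_add₀ (by norm_num : (-1:ℂ) ≠ 0), zpow_mul]
        norm_num
      have he : (-3*n - 1) * (5 * (-3*n - 1) + 1) / 2 = 2 + 9 * (n * (5*n + 3) / 2) := by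
        obtain ⟨m, hm⟩ := Int.even_mul_succ_self n
        have h1 : (-3*n - 1) * (5 * (-3*n - 1) + 1) = 45*(n*(n+1)) - 45*n + 27*n + 4 := by ring
        have h2 : n * (5*n + 3) = 5*(n*(n+1)) - 2*n := by ring
        omega
      have t2 : q ^ ((-3*n - 1) * (5 * (-3*n - 1) + 1) / 2 : ℤ)
          = q ^ 2 * w ^ (n * (5*n + 3) / 2 : ℤ) := by
        rw [he, zpow_add₀ hq0, zpow_mul, hwdef,
          show ((2:ℤ)) = ((2:ℕ):ℤ) from rfl, zpow_natCast,
          show ((9:ℤ)) = ((9:ℕ):ℤ) from rfl, zpow_natCast]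
      rw [t1, t2, jt_spec hwne n]
      ring
    rw [tsum_congr hterm, tsum_neg, tsum_mul_left, jtp_spec hw, ← split_prod hw]
    simp only [eulerPhi, rrA]
    ring
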